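/- Let V be a Jordan bimodule over Kan(n). If a is an odd homogeneous basis element of Kan(n) of the form e_I or \bar{e_I} with a ≠ \bar{1}, then R_a^2 = 0 on V. -/

import Mathlib

open Finset in
/-- The Grassmann algebra `G_n` on `n` odd generators, realized as coefficient
functions on subsets of `{1,...,n}` (the basis is `e_I`, `I ⊆ {1,...,n}`). -/
abbrev Gn (n : ℕ) (F : Type) := Finset (Fin n) → F

/-- The sign `(-1)^{#{(i,j) ∈ I×J : j < i}}` arising when multiplying `e_I · e_J`. -/
def gsign {n : ℕ} (I J : Finset (Fin n)) : ℤ :=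
  (-1) ^ (((I ×ˢ J).filter (fun p => p.2 < p.1)).card)

/-- Multiplication in the Grassmann algebra `G_n`. -/
def gmul {F : Type} [Field F] {n : ℕ} (f g : Gn n F) : Gn n F :=
  fun K => ∑ I ∈ K.powerset, (gsign I (K \ I) : F) * f I * g (K \ I)

/-- The odd superderivation `∂/∂e_j` of `G_n`. -/
def pd {F : Type} [Field F] {n : ℕ} (j : Fin n) (f : Gn n F) : Gn n F :=
  fun I => if j ∈ I then 0 else ((-1 : F) ^ ((I.filter (fun i => i < j)).card)) * f (insert j I)

/-- The grade involution of `G_n`: `e_I ↦ (-1)^{|I|} e_I`. -/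
def gInv {F : Type} [Field F] {n : ℕ} (f : Gn n F) : Gn n F :=
  fun I => ((-1 : F) ^ I.card) * f I

/-- The Poisson bracket `{f,g} = (-1)^{|f|} ∑_i (∂f/∂e_i)(∂g/∂e_i)` of `G_n`
(the sign `(-1)^{|f|}` is incorporated bilinearly via the grade involution). -/
def gbr {F : Type} [Field F] {n : ℕ} (f g : Gn n F) : Gn n F :=
  ∑ i : Fin n, gmul (pd i (gInv f)) (pd i g)

/-- `f ∈ G_n` is homogeneous of parity `p`. -/
def homog {F : Type} [Field F] {n : ℕ} (p : ZMod 2) (f : Gn n F) : Prop :=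
  ∀ I : Finset (Fin n), ((I.card : ZMod 2) ≠ p) → f I = 0

/-- `(-1)^p` as an element of the field `F`, for `p : ZMod 2`. -/
def sgn (F : Type) [Field F] (p : ZMod 2) : F := if p = 0 then 1 else -1
/-- The Kantor double `Kan(n) = J(G_n) = G_n ⊕ \bar{G_n}`: an element `(a,b)`
represents `a + \bar{b}`. -/
abbrev Kan (n : ℕ) (F : Type) := Gn n F × Gn n F

/-- Multiplication of the Kantor double `Kan(n)`; the signs `(-1)^{|g|}` of the
Kantor doubling process are incorporated bilinearly via the grade involution. -/
def kmul {F : Type} [Field F] {n : ℕ} (x y : Kan n F) : Kan n F :=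
  (gmul x.1 y.1 + gbr x.2 (gInv y.2), gmul x.1 y.2 + gmul x.2 (gInv y.1))

/-- The basis element `e_I` of `G_n` (coefficient `1` at `I`). -/
def single {F : Type} [Field F] {n : ℕ} (I : Finset (Fin n)) : Gn n F :=
  fun J => if J = I then 1 else 0

/-- The element `e_I ∈ Kan(n)`. -/
def eK {F : Type} [Field F] {n : ℕ} (I : Finset (Fin n)) : Kan n F := (single I, 0)

/-- The element `\bar{e_I} ∈ Kan(n)`. In particular `beK ∅ = \bar{1}`. -/
def beK {F : Type} [Field F] {n : ℕ} (I : Finset (Fin n)) : Kan n F := (0, single I)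

/-- Homogeneity of parity `p` in `Kan(n)` (the bar flips parity). -/
def kHomog {F : Type} [Field F] {n : ℕ} (p : ZMod 2) (x : Kan n F) : Prop :=
  homog p x.1 ∧ homog (p + 1) x.2

/-- Even part of an element of `G_n`. -/
def evenP {F : Type} [Field F] {n : ℕ} (f : Gn n F) : Gn n F :=
  fun I => if (I.card : ZMod 2) = 0 then f I else 0

/-- Odd part of an element of `G_n`. -/
def oddP {F : Type} [Field F] {n : ℕ} (f : Gn n F) : Gn n F :=
  fun I => if (I.card : ZMod 2) = 1 then f I else 0

/-- Even part of an element of `Kan(n)`. -/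
def kEvenPart {F : Type} [Field F] {n : ℕ} (x : Kan n F) : Kan n F := (evenP x.1, oddP x.2)

/-- Odd part of an element of `Kan(n)`. -/
def kOddPart {F : Type} [Field F] {n : ℕ} (x : Kan n F) : Kan n F := (oddP x.1, evenP x.2)

/-- A super vector space is encoded as a product `V0 × V1`; homogeneity of parity `p`. -/
def vHomog {V0 V1 : Type} [Zero V0] [Zero V1] (p : ZMod 2) (v : V0 × V1) : Prop :=
  if p = 0 then v.2 = 0 else v.1 = 0

/-- The left action of `Kan(n)` on a superbimodule determined from the right action
`act` by supercommutativity: `a·v = (-1)^{|a||v|} v·a` for homogeneous `a, v`. -/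
def leftAct {F : Type} [Field F] {n : ℕ} {V0 V1 : Type} [AddCommGroup V0] [Module F V0]
    [AddCommGroup V1] [Module F V1]
    (act : V0 × V1 →ₗ[F] Kan n F →ₗ[F] V0 × V1) (x : Kan n F) (w : V0 × V1) : V0 × V1 :=
  act w (kEvenPart x) + act ((w.1, 0) : V0 × V1) (kOddPart x)
    - act ((0, w.2) : V0 × V1) (kOddPart x)

/-- Multiplication in the split null extension `E = Kan(n) ⊕ V`. -/
def emul {F : Type} [Field F] {n : ℕ} {V0 V1 : Type} [AddCommGroup V0] [Module F V0]
    [AddCommGroup V1] [Module F V1]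
    (act : V0 × V1 →ₗ[F] Kan n F →ₗ[F] V0 × V1)
    (z w : Kan n F × (V0 × V1)) : Kan n F × (V0 × V1) :=
  (kmul z.1 w.1, act z.2 w.1 + leftAct act z.1 w.2)

/-- Homogeneity in the split null extension. -/
def eHomog {F : Type} [Field F] {n : ℕ} {V0 V1 : Type} [AddCommGroup V0] [Module F V0]
    [AddCommGroup V1] [Module F V1] (p : ZMod 2) (z : Kan n F × (V0 × V1)) : Prop :=
  kHomog p z.1 ∧ vHomog p z.2

/-- A supercommutative superalgebra structure `mul` (with homogeneity predicate `hom`)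
is Jordan: supercommutativity and the linearized super Jordan identity hold for
homogeneous elements. -/
def JordanSuper (F : Type) [Field F] {E : Type} [AddCommGroup E] [Module F E]
    (hom : ZMod 2 → E → Prop) (mul : E → E → E) : Prop :=
  (∀ (p q : ZMod 2) (x y : E), hom p x → hom q y → mul x y = sgn F (p * q) • mul y x) ∧
  (∀ (px py pz pt : ZMod 2) (x y z t : E),
      hom px x → hom py y → hom pz z → hom pt t →
      mul (mul (mul x y) z) t
        + sgn F (py * pz + py * pt + pz * pt) • mul (mul (mul x t) z) y
        + sgn F (px * py + px * pz + px * pt + pz * pt) • mul (mul (mul y t) z) x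
      = mul (mul x y) (mul z t) + sgn F (py * pz) • mul (mul x z) (mul y t)
        + sgn F (pt * (py + pz)) • mul (mul x t) (mul y z))

/-- `V = V0 ⊕ V1` with right action `act` is a Jordan superbimodule over `Kan(n)`:
the split null extension `Kan(n) ⊕ V` is a (graded) Jordan superalgebra. -/
def IsJordanBimod {F : Type} [Field F] {n : ℕ} {V0 V1 : Type} [AddCommGroup V0] [Module F V0]
    [AddCommGroup V1] [Module F V1]
    (act : V0 × V1 →ₗ[F] Kan n F →ₗ[F] V0 × V1) : Prop :=
  JordanSuper F (E := Kan n F × (V0 × V1)) eHomog (emul act) ∧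
  (∀ (p q : ZMod 2) (z w : Kan n F × (V0 × V1)),
      eHomog p z → eHomog q w → eHomog (p + q) (emul act z w))


section Aux

variable {F : Type} [Field F] {n : ℕ}

open Finset

/-! ### Basic lemmas on `Gn` operations -/

lemma homog_zero (p : ZMod 2) : homog p (0 : Gn n F) := fun _ _ => rfl

lemma homog_single (I : Finset (Fin n)) : homog ((I.card : ZMod 2)) (single I : Gn n F) := by
  intro J hJ
  unfold single
  rw [if_neg]
  intro h; exact hJ (by rw [h])

lemma homog_smul {p : ZMod 2} {f : Gn n F} (c : F) (hf : homog p f) : homog p (c • f) := by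
  intro I hI
  show c * f I = 0
  rw [hf I hI, mul_zero]

lemma gmul_zero_right (f : Gn n F) : gmul f 0 = 0 := by
  funext K; simp [gmul]

lemma gmul_zero_left (g : Gn n F) : gmul 0 g = 0 := by
  funext K; simp [gmul]

lemma gInv_zero : gInv (0 : Gn n F) = 0 := by
  funext I; simp [gInv]

lemma pd_zero (j : Fin n) : pd j (0 : Gn n F) = 0 := by
  funext I; simp [pd]

lemma gbr_zero_left (g : Gn n F) : gbr 0 g = 0 := by
  simp [gbr, gInv_zero, pd_zero, gmul_zero_left]

lemma gbr_zero_right (f : Gn n F) : gbr f 0 = 0 := by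
  simp [gbr, pd_zero, gmul_zero_right]

lemma gmul_smul_left (c : F) (f g : Gn n F) : gmul (c • f) g = c • gmul f g := by
  funext K
  show (∑ I ∈ K.powerset, _) = c * ∑ I ∈ K.powerset, _
  rw [Finset.mul_sum]
  apply Finset.sum_congr rfl
  intro I _
  show (gsign I (K \ I) : F) * (c * f I) * g (K \ I) = _
  ring

lemma gmul_smul_right (c : F) (f g : Gn n F) : gmul f (c • g) = c • gmul f g := by
  funext K
  show (∑ I ∈ K.powerset, _) = c * ∑ I ∈ K.powerset, _
  rw [Finset.mul_sum]
  apply Finset.sum_congr rfl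
  intro I _
  show (gsign I (K \ I) : F) * f I * (c * g (K \ I)) = _
  ring

lemma pd_smul (j : Fin n) (c : F) (f : Gn n F) : pd j (c • f) = c • pd j f := by
  funext I
  show (if j ∈ I then 0 else _) = c * (if j ∈ I then 0 else _)
  split
  · rw [mul_zero]
  · show (-1 : F) ^ _ * (c * f _) = c * ((-1 : F) ^ _ * f _)
    ring

lemma gInv_smul (c : F) (f : Gn n F) : gInv (c • f) = c • gInv f := by
  funext I
  show (-1 : F) ^ I.card * (c * f I) = c * ((-1 : F) ^ I.card * f I)
  ring

lemma gbr_smul_right (c : F) (f g : Gn n F) : gbr f (c • g) = c • gbr f g := by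
  unfold gbr
  rw [Finset.smul_sum]
  apply Finset.sum_congr rfl
  intro i _
  rw [pd_smul, gmul_smul_right]

lemma gsign_empty_left (J : Finset (Fin n)) : gsign (∅ : Finset (Fin n)) J = 1 := by
  simp [gsign]

lemma gsign_empty_right (I : Finset (Fin n)) : gsign I (∅ : Finset (Fin n)) = 1 := by
  simp [gsign]

lemma gmul_single_disj {I J : Finset (Fin n)} (h : Disjoint I J) :
    gmul (single I) (single J) = ((gsign I J : F)) • (single (I ∪ J) : Gn n F) := by
  funext K
  show (∑ I' ∈ K.powerset, (gsign I' (K \ I') : F) * single I I' * single J (K \ I'))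
    = (gsign I J : F) * single (I ∪ J) K
  rcases eq_or_ne K (I ∪ J) with hK | hK
  · subst hK
    rw [Finset.sum_eq_single I]
    · have h1 : (I ∪ J) \ I = J := Finset.union_sdiff_cancel_left h
      rw [h1]
      simp [single]
    · intro b _ hbne
      simp [single, hbne]
    · intro h2
      exact absurd (Finset.mem_powerset.mpr Finset.subset_union_left) h2
  · have hs : (single (I ∪ J) : Gn n F) K = 0 := by simp [single, hK]
    rw [hs, mul_zero]
    apply Finset.sum_eq_zero
    intro b hb
    rcases eq_or_ne b I with rfl | hbne
    · have hKJ : K \ b ≠ J := by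
        intro hKJ
        apply hK
        have hIK := Finset.mem_powerset.mp hb
        rw [← hKJ, Finset.union_sdiff_of_subset hIK]
      simp [single, hKJ]
    · simp [single, hbne]

lemma gmul_single_nondisj {I J : Finset (Fin n)} (h : ¬ Disjoint I J) :
    gmul (single I) (single J) = (0 : Gn n F) := by
  funext K
  show (∑ I' ∈ K.powerset, (gsign I' (K \ I') : F) * single I I' * single J (K \ I')) = 0
  apply Finset.sum_eq_zero
  intro b _
  by_cases hb : b = I
  · by_cases hK2 : K \ b = J
    · exact absurd (by rw [← hb, ← hK2]; exact Finset.sdiff_disjoint.symm) h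
    · simp [single, hK2]
  · simp [single, hb]

lemma gInv_single (I : Finset (Fin n)) :
    gInv (single I : Gn n F) = ((-1 : F) ^ I.card) • single I := by
  funext J
  show (-1 : F) ^ J.card * single I J = (-1 : F) ^ I.card * single I J
  by_cases h : J = I
  · subst h; rfl
  · simp [single, h]

lemma pd_single (j : Fin n) (K : Finset (Fin n)) :
    pd j (single K : Gn n F) =
      if j ∈ K then ((-1 : F) ^ (((K.erase j).filter (fun i => i < j)).card)) • single (K.erase j)
      else 0 := by
  funext I
  by_cases hjK : j ∈ K
  · rw [if_pos hjK]
    show (if j ∈ I then 0 else (-1 : F) ^ _ * single K (insert j I))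
      = (-1 : F) ^ _ * single (K.erase j) I
    by_cases hjI : j ∈ I
    · rw [if_pos hjI]
      have hne : I ≠ K.erase j := by
        intro h; subst h; exact (Finset.notMem_erase j K) hjI
      simp [single, hne]
    · rw [if_neg hjI]
      by_cases hIK : insert j I = K
      · have hI : I = K.erase j := by rw [← hIK, Finset.erase_insert hjI]
        rw [hI]
        simp [single, Finset.insert_erase hjK]
      · have hne : I ≠ K.erase j := by
          intro h
          exact hIK (by rw [h, Finset.insert_erase hjK])
        simp [single, hIK, hne]
  · rw [if_neg hjK]
    show (if j ∈ I then 0 else (-1 : F) ^ _ * single K (insert j I)) = 0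
    by_cases hjI : j ∈ I
    · rw [if_pos hjI]
    · rw [if_neg hjI]
      have : insert j I ≠ K := by
        intro h; exact hjK (h ▸ Finset.mem_insert_self j I)
      simp [single, this]

lemma gbr_empty_left (g : Gn n F) : gbr (single ∅) g = 0 := by
  unfold gbr
  apply Finset.sum_eq_zero
  intro i _
  rw [gInv_single]
  simp only [Finset.card_empty, pow_zero, one_smul]
  rw [pd_single, if_neg (Finset.notMem_empty i), gmul_zero_left]

lemma gbr_singleton {j : Fin n} {K : Finset (Fin n)} (hjK : j ∈ K) :
    gbr (single {j}) (single K : Gn n F)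
      = (-(-1 : F) ^ (((K.erase j).filter (fun i => i < j)).card)) • single (K.erase j) := by
  unfold gbr
  rw [Finset.sum_eq_single j]
  · have h1 : pd j (gInv (single {j})) = (-1 : F) • (single ∅ : Gn n F) := by
      rw [gInv_single, Finset.card_singleton, pow_one, pd_smul, pd_single,
        if_pos (Finset.mem_singleton_self j), Finset.erase_singleton]
      simp
    rw [h1, pd_single, if_pos hjK, gmul_smul_left, gmul_smul_right,
      gmul_single_disj (Finset.disjoint_empty_left _), gsign_empty_left,
      Finset.empty_union, Int.cast_one, one_smul, smul_smul, neg_one_mul]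
  · intro b _ hbj
    have h2 : pd b (gInv (single {j})) = (0 : Gn n F) := by
      rw [gInv_single, Finset.card_singleton, pow_one, pd_smul, pd_single,
        if_neg (by simp [hbj]), smul_zero]
    rw [h2, gmul_zero_left]
  · intro h; exact absurd (Finset.mem_univ j) h

/-! ### `kmul` lemmas -/

lemma kmul_zero_left (y : Kan n F) : kmul 0 y = 0 := by
  unfold kmul
  simp [gmul_zero_left, gbr_zero_left]

lemma kmul_zero_right (x : Kan n F) : kmul x 0 = 0 := by
  unfold kmul
  simp [gInv_zero, gmul_zero_right, gbr_zero_right]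

lemma kmul_eK_eK (I J : Finset (Fin n)) :
    kmul (eK I) (eK J) = ((gmul (single I) (single J) : Gn n F), 0) := by
  unfold kmul eK
  simp [gInv_zero, gbr_zero_left, gmul_zero_right, gmul_zero_left]

lemma kmul_eK_beK (I J : Finset (Fin n)) :
    kmul (eK I) (beK J) = ((0 : Gn n F), gmul (single I) (single J)) := by
  unfold kmul eK beK
  simp [gInv_zero, gbr_zero_left, gmul_zero_right, gmul_zero_left]

lemma kmul_beK_beK (J K : Finset (Fin n)) :
    kmul (beK J) (beK K) = ((gbr (single J) (gInv (single K)) : Gn n F), 0) := by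
  unfold kmul beK
  simp [gInv_zero, gmul_zero_left, gmul_zero_right]

/-! ### homogeneity lemmas -/

lemma kHomog_zero (q : ZMod 2) : kHomog q (0 : Kan n F) :=
  ⟨homog_zero q, homog_zero _⟩

lemma kHomog_eK (I : Finset (Fin n)) : kHomog ((I.card : ZMod 2)) (eK I : Kan n F) :=
  ⟨homog_single I, homog_zero _⟩

lemma zmod2_add_two : ∀ c : ZMod 2, c + 1 + 1 = c := by decide

lemma kHomog_beK (I : Finset (Fin n)) : kHomog ((I.card : ZMod 2) + 1) (beK I : Kan n F) := by
  refine ⟨homog_zero _, ?_⟩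
  rw [zmod2_add_two]
  exact homog_single I

lemma kHomog_smul {q : ZMod 2} {a : Kan n F} (c : F) (h : kHomog q a) : kHomog q (c • a) :=
  ⟨homog_smul c h.1, homog_smul c h.2⟩

/-! ### even/odd part lemmas -/

lemma evenP_of_homog1 {f : Gn n F} (h : homog 1 f) : evenP f = 0 := by
  funext I
  unfold evenP
  split
  · next h0 => exact h I (by rw [h0]; exact zero_ne_one)
  · rfl

lemma oddP_of_homog1 {f : Gn n F} (h : homog 1 f) : oddP f = f := by
  funext I
  unfold oddP
  split
  · rfl
  · next h0 => exact (h I h0).symm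

lemma evenP_of_homog0 {f : Gn n F} (h : homog 0 f) : evenP f = f := by
  funext I
  unfold evenP
  split
  · rfl
  · next h0 => exact (h I h0).symm

lemma oddP_of_homog0 {f : Gn n F} (h : homog 0 f) : oddP f = 0 := by
  funext I
  unfold oddP
  split
  · next h0 => exact h I (by rw [h0]; exact one_ne_zero)
  · rfl

lemma kEvenPart_of_odd {x : Kan n F} (h : kHomog 1 x) : kEvenPart x = 0 := by
  unfold kEvenPart
  rw [evenP_of_homog1 h.1, oddP_of_homog0 (by have h2 : homog (1 + 1) x.2 := h.2; rwa [show (1 : ZMod 2) + 1 = 0 from by decide] at h2)]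
  rfl

lemma kOddPart_of_odd {x : Kan n F} (h : kHomog 1 x) : kOddPart x = x := by
  unfold kOddPart
  rw [oddP_of_homog1 h.1, evenP_of_homog0 (by have h2 : homog (1 + 1) x.2 := h.2; rwa [show (1 : ZMod 2) + 1 = 0 from by decide] at h2)]

lemma evenP_zero : evenP (0 : Gn n F) = 0 := by funext I; unfold evenP; split <;> rfl

lemma oddP_zero : oddP (0 : Gn n F) = 0 := by funext I; unfold oddP; split <;> rfl

lemma kEvenPart_zero : kEvenPart (0 : Kan n F) = 0 := by
  unfold kEvenPart
  rw [Prod.fst_zero, Prod.snd_zero, evenP_zero, oddP_zero]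
  rfl

lemma kOddPart_zero : kOddPart (0 : Kan n F) = 0 := by
  unfold kOddPart
  rw [Prod.fst_zero, Prod.snd_zero, evenP_zero, oddP_zero]
  rfl

end Aux


section AuxV

variable {F : Type} [Field F] {n : ℕ} {V0 V1 : Type} [AddCommGroup V0] [Module F V0]
  [AddCommGroup V1] [Module F V1]
  (act : V0 × V1 →ₗ[F] Kan n F →ₗ[F] V0 × V1)

/-! ### `vHomog`, `eHomog` lemmas -/

lemma vHomog_zeroV (q : ZMod 2) : vHomog q (0 : V0 × V1) := by
  unfold vHomog; split <;> simp

lemma vHomog_mk0 (v1 : V0) : vHomog 0 ((v1, 0) : V0 × V1) := by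
  unfold vHomog; rw [if_pos rfl]

lemma vHomog_mk1 (v2 : V1) : vHomog 1 ((0, v2) : V0 × V1) := by
  unfold vHomog; rw [if_neg one_ne_zero]

lemma vHomog_one_fst {w : V0 × V1} (h : vHomog 1 w) : w.1 = 0 := by
  unfold vHomog at h; rwa [if_neg one_ne_zero] at h

lemma vHomog_zero_snd {w : V0 × V1} (h : vHomog 0 w) : w.2 = 0 := by
  unfold vHomog at h; rwa [if_pos rfl] at h

/-! ### `leftAct` lemmas -/

lemma leftAct_zero_left (w : V0 × V1) : leftAct act 0 w = 0 := by
  unfold leftAct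
  rw [kEvenPart_zero, kOddPart_zero]
  simp

lemma leftAct_zero_right (x : Kan n F) : leftAct act x 0 = 0 := by
  unfold leftAct
  simp

lemma leftAct_odd {x : Kan n F} (hx : kHomog 1 x) (w : V0 × V1) :
    leftAct act x w = act (w.1, 0) x - act (0, w.2) x := by
  unfold leftAct
  rw [kEvenPart_of_odd hx, kOddPart_of_odd hx]
  simp

/-! ### `emul` shape lemmas -/

lemma emul_kk (a b : Kan n F) :
    emul act (a, (0 : V0 × V1)) (b, (0 : V0 × V1)) = (kmul a b, (0 : V0 × V1)) := by
  unfold emul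
  simp [leftAct_zero_right]

lemma emul_kv (a : Kan n F) (w : V0 × V1) :
    emul act (a, (0 : V0 × V1)) ((0 : Kan n F), w) = ((0 : Kan n F), leftAct act a w) := by
  unfold emul
  simp [kmul_zero_right]

lemma emul_vk (w : V0 × V1) (b : Kan n F) :
    emul act ((0 : Kan n F), w) (b, (0 : V0 × V1)) = ((0 : Kan n F), act w b) := by
  unfold emul
  simp [kmul_zero_left, leftAct_zero_right]

lemma emul_zero_left (w : Kan n F × (V0 × V1)) : emul act 0 w = 0 := by
  unfold emul
  simp [kmul_zero_left, leftAct_zero_left]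

lemma emul_zero_right (z : Kan n F × (V0 × V1)) : emul act z 0 = 0 := by
  unfold emul
  simp [kmul_zero_right, leftAct_zero_right]

lemma emul_vv (w w' : V0 × V1) :
    emul act ((0 : Kan n F), w) ((0 : Kan n F), w') = ((0 : Kan n F), (0 : V0 × V1)) := by
  unfold emul
  simp [kmul_zero_left, leftAct_zero_left]

/-! ### grading -/

lemma act_grading
    (hJ2 : ∀ (p q : ZMod 2) (z w : Kan n F × (V0 × V1)),
      eHomog p z → eHomog q w → eHomog (p + q) (emul act z w))
    {p q : ZMod 2} {v : V0 × V1} {x : Kan n F} (hv : vHomog p v) (hx : kHomog q x) :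
    vHomog (p + q) (act v x) := by
  have h := (hJ2 p q ((0 : Kan n F), v) (x, (0 : V0 × V1))
    ⟨kHomog_zero p, hv⟩ ⟨hx, vHomog_zeroV q⟩).2
  have he : (emul act ((0 : Kan n F), v) (x, (0 : V0 × V1))).2 = act v x := by
    rw [emul_vk]
  rwa [he] at h

/-! ### sgn lemmas -/

lemma sgn_zero : sgn F 0 = 1 := if_pos rfl

lemma sgn_one : sgn F 1 = -1 := if_neg one_ne_zero

/-! ### Key Lemma 1 -/

lemma key1 (hJ : IsJordanBimod act) (hchar : (2 : F) ≠ 0)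
    {qx qy : ZMod 2} {x y t : Kan n F} {ε : F} (hε : ε ≠ 0)
    (hx : kHomog qx x) (hy : kHomog qy y) (ht : kHomog 1 t)
    (hxy : kmul x y = ε • t) (hxt : kmul x t = 0) (hyt : kmul y t = 0) :
    ∀ v : V0 × V1, act (act v t) t = 0 := by
  have hεt : kHomog 1 (ε • t) := kHomog_smul ε ht
  have main : ∀ (u : V0 × V1), (vHomog 0 u ∨ vHomog 1 u) → act (act u t) t = 0 := by
    intro u hu
    have hup : ∃ p : ZMod 2, vHomog p u := by
      rcases hu with h | h
      · exact ⟨0, h⟩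
      · exact ⟨1, h⟩
    obtain ⟨p, hp⟩ := hup
    have hid := hJ.1.2 qx qy p 1 (x, (0 : V0 × V1)) (y, (0 : V0 × V1))
      ((0 : Kan n F), u) (t, (0 : V0 × V1))
      ⟨hx, vHomog_zeroV qx⟩ ⟨hy, vHomog_zeroV qy⟩ ⟨kHomog_zero p, hp⟩ ⟨ht, vHomog_zeroV 1⟩
    -- the two surviving leftAct expressions
    have l1 : leftAct act (ε • t) u = act (u.1, 0) (ε • t) - act (0, u.2) (ε • t) :=
      leftAct_odd act hεt u
    have hw : vHomog (p + 1) (act u t) := act_grading act hJ.2 hp ht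
    simp only [emul_kk, emul_kv, emul_vk, emul_vv, hxy, hxt, hyt, kmul_zero_left,
      kmul_zero_right, leftAct_zero_left, leftAct_zero_right, l1] at hid
    -- now expand the remaining leftAct on (act u t)
    have l2 : leftAct act (ε • t) (act u t)
        = act ((act u t).1, 0) (ε • t) - act (0, (act u t).2) (ε • t) :=
      leftAct_odd act hεt (act u t)
    simp only [l2, map_zero, map_sub, map_smul, LinearMap.zero_apply, LinearMap.smul_apply,
      LinearMap.sub_apply, smul_zero, Prod.mk_zero_zero, add_zero, zero_add, zero_sub,
      sub_zero] at hid
    -- it suffices to derive the sign contradiction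
    suffices hsuff : ε • act (act u t) t = -(ε • act (act u t) t) by
      have h3 : ((2 * ε) : F) • act (act u t) t = 0 := by
        rw [mul_smul, two_smul]
        exact eq_neg_iff_add_eq_zero.mp hsuff
      have h4 := congrArg (fun z => ((2 * ε) : F)⁻¹ • z) h3
      rwa [smul_smul, inv_mul_cancel₀ (mul_ne_zero hchar hε), one_smul, smul_zero] at h4
    -- case on parity of u
    rcases hu with h0 | h1
    · -- u = (u.1, 0) ; (act u t).1 = 0
      have hu2 : u.2 = 0 := vHomog_zero_snd h0
      have hw1 : (act u t).1 = 0 := by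
        apply vHomog_one_fst
        have : vHomog (0 + 1) (act u t) := act_grading act hJ.2 h0 ht
        simpa using this
      have e1 : ((u.1, 0) : V0 × V1) = u := by rw [← hu2]
      have e2 : (((0 : V0), (act u t).2) : V0 × V1) = act u t := by rw [← hw1]
      rw [hu2, hw1, e1, e2] at hid
      simp only [Prod.mk_zero_zero, map_zero, LinearMap.zero_apply, smul_zero, sub_zero,
        zero_sub] at hid
      exact congrArg Prod.snd hid
    · -- u = (0, u.2) ; (act u t).2 = 0
      have hu1 : u.1 = 0 := vHomog_one_fst h1
      have hw2 : (act u t).2 = 0 := by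
        apply vHomog_zero_snd
        have h5 : vHomog (1 + 1) (act u t) := act_grading act hJ.2 h1 ht
        rwa [show ((1 : ZMod 2) + 1) = 0 by decide] at h5
      have e1 : (((0 : V0), u.2) : V0 × V1) = u := by rw [← hu1]
      have e2 : (((act u t).1, 0) : V0 × V1) = act u t := by rw [← hw2]
      rw [hu1, hw2, e1, e2] at hid
      simp only [Prod.mk_zero_zero, map_zero, LinearMap.zero_apply, smul_zero, sub_zero,
        zero_sub] at hid
      exact (congrArg Prod.snd hid).symm
  intro v
  have hv : v = ((v.1, 0) : V0 × V1) + ((0, v.2) : V0 × V1) := by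
    simp [Prod.ext_iff]
  rw [hv, map_add, LinearMap.add_apply, map_add, LinearMap.add_apply,
    main _ (Or.inl (vHomog_mk0 v.1)), main _ (Or.inr (vHomog_mk1 v.2)), add_zero]

/-! ### Key Lemma 2 -/

lemma key2 (hJ : IsJordanBimod act) (hchar : (2 : F) ≠ 0)
    {x y t : Kan n F} {ε μ : F} (hμ : μ ≠ 0)
    (hx : kHomog 1 x) (hy : kHomog 0 y) (ht : kHomog 1 t)
    (hxy : kmul x y = ε • t) (hxt : kmul x t = 0) (hyt : kmul y t = μ • x)
    (hRt : ∀ u : V0 × V1, act (act u t) t = 0) :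
    ∀ v : V0 × V1, act (act v x) x = 0 := by
  have hεt : kHomog 1 (ε • t) := kHomog_smul ε ht
  have hμx : kHomog 1 (μ • x) := kHomog_smul μ hx
  have main : ∀ (u : V0 × V1), (vHomog 0 u ∨ vHomog 1 u) → act (act u x) x = 0 := by
    intro u hu
    have hup : ∃ p : ZMod 2, vHomog p u := by
      rcases hu with h | h
      · exact ⟨0, h⟩
      · exact ⟨1, h⟩
    obtain ⟨p, hp⟩ := hup
    have hid := hJ.1.2 1 0 p 1 (x, (0 : V0 × V1)) (y, (0 : V0 × V1))
      ((0 : Kan n F), u) (t, (0 : V0 × V1))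
      ⟨hx, vHomog_zeroV 1⟩ ⟨hy, vHomog_zeroV 0⟩ ⟨kHomog_zero p, hp⟩ ⟨ht, vHomog_zeroV 1⟩
    have l1 := leftAct_odd act hεt u
    have l2 := leftAct_odd act hεt (act u t)
    have l3 := leftAct_odd act hμx u
    have l4 := leftAct_odd act hx u
    simp only [emul_kk, emul_kv, emul_vk, emul_vv, hxy, hxt, hyt, kmul_zero_left,
      kmul_zero_right, leftAct_zero_left, leftAct_zero_right, l1, l2, l3, l4,
      map_zero, map_sub, map_smul, LinearMap.zero_apply, LinearMap.smul_apply,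
      LinearMap.sub_apply, smul_zero, Prod.mk_zero_zero, add_zero, zero_add,
      zero_sub, sub_zero] at hid
    simp only [mul_zero, mul_one, zero_mul, one_mul, add_zero, zero_add] at hid
    simp only [show ∀ q : ZMod 2, q + 1 + q = 1 from by decide, sgn_one, sgn_zero,
      one_smul, neg_smul, neg_sub, neg_neg] at hid
    suffices hsuff : μ • act (act u x) x = -(μ • act (act u x) x) by
      have h3 : ((2 * μ) : F) • act (act u x) x = 0 := by
        rw [mul_smul, two_smul]
        exact eq_neg_iff_add_eq_zero.mp hsuff
      have h4 := congrArg (fun z => ((2 * μ) : F)⁻¹ • z) h3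
      rwa [smul_smul, inv_mul_cancel₀ (mul_ne_zero hchar hμ), one_smul, smul_zero] at h4
    rcases hu with h0 | h1
    · have hu2 : u.2 = 0 := vHomog_zero_snd h0
      have hw1 : (act u t).1 = 0 := by
        apply vHomog_one_fst
        have h5 : vHomog (0 + 1) (act u t) := act_grading act hJ.2 h0 ht
        simpa using h5
      have e1 : ((u.1, 0) : V0 × V1) = u := by rw [← hu2]
      have e2 : (((0 : V0), (act u t).2) : V0 × V1) = act u t := by rw [← hw1]
      rw [hu2, hw1, e1, e2] at hid
      simp only [Prod.mk_zero_zero, emul_zero_left, emul_zero_right, map_zero,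
        LinearMap.zero_apply, smul_zero, sub_zero, zero_sub, hRt, neg_zero,
        Prod.neg_mk, add_zero, zero_add] at hid
      exact congrArg Prod.snd hid.symm
    · have hu1 : u.1 = 0 := vHomog_one_fst h1
      have hw2 : (act u t).2 = 0 := by
        apply vHomog_zero_snd
        have h5 : vHomog (1 + 1) (act u t) := act_grading act hJ.2 h1 ht
        rwa [show ((1 : ZMod 2) + 1) = 0 by decide] at h5
      have e1 : (((0 : V0), u.2) : V0 × V1) = u := by rw [← hu1]
      have e2 : (((act u t).1, 0) : V0 × V1) = act u t := by rw [← hw2]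
      rw [hu1, hw2, e1, e2] at hid
      simp only [Prod.mk_zero_zero, emul_zero_left, emul_zero_right, map_zero,
        LinearMap.zero_apply, smul_zero, sub_zero, zero_sub, hRt, neg_zero,
        Prod.neg_mk, add_zero, zero_add, neg_neg, smul_neg] at hid
      exact congrArg Prod.snd hid
  intro v
  have hv : v = ((v.1, 0) : V0 × V1) + ((0, v.2) : V0 × V1) := by
    simp [Prod.ext_iff]
  rw [hv, map_add, LinearMap.add_apply, map_add, LinearMap.add_apply,
    main _ (Or.inl (vHomog_mk0 v.1)), main _ (Or.inr (vHomog_mk1 v.2)), add_zero]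


end AuxV

/-- for a Jordan bimodule `V` over `Kan(n)`, every odd basis element
`a = e_I` (`|I|` odd) or `a = \bar{e_I}` (`|I|` even, `a ≠ \bar{1}`) satisfies `R_a² = 0`. -/
theorem odd_square_zero {F : Type} [Field F] (hchar : (2 : F) ≠ 0)
    {n : ℕ} (hn : 2 ≤ n)
    {V0 V1 : Type} [AddCommGroup V0] [Module F V0] [AddCommGroup V1] [Module F V1]
    (act : V0 × V1 →ₗ[F] Kan n F →ₗ[F] V0 × V1) (hJ : IsJordanBimod act) :
    (∀ I : Finset (Fin n), (I.card : ZMod 2) = 1 →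
      ∀ v : V0 × V1, act (act v (eK I)) (eK I) = 0) ∧
    (∀ I : Finset (Fin n), (I.card : ZMod 2) = 0 → I ≠ ∅ →
      ∀ v : V0 × V1, act (act v (beK I)) (beK I) = 0) := by
  -- Part 2: a = \bar{e_I}, |I| even, I ≠ ∅
  have part2 : ∀ I : Finset (Fin n), (I.card : ZMod 2) = 0 → I ≠ ∅ →
      ∀ v : V0 × V1, act (act v (beK I)) (beK I) = 0 := by
    intro I hI0 hne
    have hx1 : kHomog (0 : ZMod 2) (eK I : Kan n F) := by
      have h := kHomog_eK (F := F) I; rwa [hI0] at h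
    have hy1 : kHomog (1 : ZMod 2) (beK (∅ : Finset (Fin n)) : Kan n F) := by
      have h := kHomog_beK (F := F) (∅ : Finset (Fin n))
      simpa using h
    have ht1 : kHomog (1 : ZMod 2) (beK I : Kan n F) := by
      have h := kHomog_beK (F := F) I; rwa [hI0, zero_add] at h
    have hxy1 : kmul (eK I) (beK (∅ : Finset (Fin n))) = (1 : F) • (beK I : Kan n F) := by
      rw [kmul_eK_beK, gmul_single_disj (Finset.disjoint_empty_right _), gsign_empty_right]
      simp [beK]
    have hxt1 : kmul (eK I) (beK I) = (0 : Kan n F) := by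
      rw [kmul_eK_beK,
        gmul_single_nondisj (fun hd => hne (by simpa using disjoint_self.mp hd))]
      rfl
    have hyt1 : kmul (beK (∅ : Finset (Fin n))) (beK I) = (0 : Kan n F) := by
      rw [kmul_beK_beK, gInv_single, gbr_smul_right, gbr_empty_left, smul_zero]
      rfl
    exact key1 act hJ hchar one_ne_zero hx1 hy1 ht1 hxy1 hxt1 hyt1
  -- Part 1: a = e_I, |I| odd
  have part1 : ∀ I : Finset (Fin n), (I.card : ZMod 2) = 1 →
      ∀ v : V0 × V1, act (act v (eK I)) (eK I) = 0 := by
    intro I hI1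
    have hne : I.Nonempty := by
      rw [Finset.nonempty_iff_ne_empty]
      intro h; subst h
      simp at hI1
    by_cases hcard : I.card = 1
    · -- |I| = 1
      obtain ⟨i, rfl⟩ := Finset.card_eq_one.mp hcard
      haveI : Nontrivial (Fin n) :=
        ⟨⟨⟨0, by omega⟩, ⟨1, by omega⟩, by simp [Fin.ext_iff]⟩⟩
      obtain ⟨j, hji⟩ := exists_ne i
      have hjnm : j ∉ ({i} : Finset (Fin n)) := by simp [hji]
      have hjK : j ∈ insert j ({i} : Finset (Fin n)) := Finset.mem_insert_self j {i}
      have hcardK : (insert j ({i} : Finset (Fin n))).card = 2 := by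
        rw [Finset.card_insert_of_notMem hjnm, Finset.card_singleton]
      have hKcast : (((insert j ({i} : Finset (Fin n))).card : ℕ) : ZMod 2) = 0 := by
        rw [hcardK]; exact ZMod.natCast_self 2
      have hKne : insert j ({i} : Finset (Fin n)) ≠ ∅ := Finset.insert_ne_empty j {i}
      have heraseK : (insert j ({i} : Finset (Fin n))).erase j = {i} :=
        Finset.erase_insert hjnm
      have hx1 : kHomog (1 : ZMod 2) (eK ({i} : Finset (Fin n)) : Kan n F) := by
        have h := kHomog_eK (F := F) ({i} : Finset (Fin n))
        rwa [Finset.card_singleton, Nat.cast_one] at h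
      have hy1 : kHomog (0 : ZMod 2) (beK ({j} : Finset (Fin n)) : Kan n F) := by
        have h := kHomog_beK (F := F) ({j} : Finset (Fin n))
        rw [Finset.card_singleton] at h
        rwa [show (((1 : ℕ) : ZMod 2) + 1) = 0 from by decide] at h
      have ht1 : kHomog (1 : ZMod 2) (beK (insert j ({i} : Finset (Fin n))) : Kan n F) := by
        have h := kHomog_beK (F := F) (insert j ({i} : Finset (Fin n)))
        rwa [hKcast, zero_add] at h
      have hxy1 : kmul (eK ({i} : Finset (Fin n))) (beK ({j} : Finset (Fin n)))
          = ((gsign ({i} : Finset (Fin n)) {j} : F))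
            • (beK (insert j ({i} : Finset (Fin n))) : Kan n F) := by
        rw [kmul_eK_beK,
          gmul_single_disj (Finset.disjoint_singleton.mpr (fun h => hji h.symm)),
          Finset.union_comm, ← Finset.insert_eq]
        simp [beK]
      have hxt1 : kmul (eK ({i} : Finset (Fin n)))
          (beK (insert j ({i} : Finset (Fin n)))) = (0 : Kan n F) := by
        rw [kmul_eK_beK, gmul_single_nondisj (Finset.not_disjoint_iff.mpr
          ⟨i, Finset.mem_singleton_self i, Finset.mem_insert_of_mem (Finset.mem_singleton_self i)⟩)]
        rfl
      have hyt1 : kmul (beK ({j} : Finset (Fin n))) (beK (insert j ({i} : Finset (Fin n))))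
          = (-(-1 : F) ^ ((({i} : Finset (Fin n)).filter (fun k => k < j)).card))
            • (eK ({i} : Finset (Fin n)) : Kan n F) := by
        rw [kmul_beK_beK, gInv_single, hcardK, neg_one_sq, one_smul,
          gbr_singleton hjK, heraseK]
        simp [eK]
      have hμ : (-(-1 : F) ^ ((({i} : Finset (Fin n)).filter (fun k => k < j)).card)) ≠ 0 :=
        neg_ne_zero.mpr (pow_ne_zero _ (neg_ne_zero.mpr one_ne_zero))
      exact key2 act hJ hchar hμ hx1 hy1 ht1 hxy1 hxt1 hyt1
        (part2 _ hKcast hKne)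
    · -- |I| ≥ 2 (in fact ≥ 3)
      obtain ⟨j, hj⟩ := hne
      have h1lt : 1 < I.card := by
        have h0 : 0 < I.card := Finset.card_pos.mpr ⟨j, hj⟩
        omega
      obtain ⟨k, hk, hkj⟩ := Finset.exists_mem_ne h1lt j
      have hx1 : kHomog (1 : ZMod 2) (eK ({j} : Finset (Fin n)) : Kan n F) := by
        have h := kHomog_eK (F := F) ({j} : Finset (Fin n))
        rwa [Finset.card_singleton, Nat.cast_one] at h
      have hy1 : kHomog (0 : ZMod 2) (eK (I \ {j}) : Kan n F) := by
        have h := kHomog_eK (F := F) (I \ {j})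
        rwa [Finset.card_sdiff_of_subset (Finset.singleton_subset_iff.mpr hj), Finset.card_singleton,
          Nat.cast_sub (by omega), Nat.cast_one, hI1, sub_self] at h
      have ht1 : kHomog (1 : ZMod 2) (eK I : Kan n F) := by
        have h := kHomog_eK (F := F) I; rwa [hI1] at h
      have hxy1 : kmul (eK ({j} : Finset (Fin n))) (eK (I \ {j}))
          = ((gsign ({j} : Finset (Fin n)) (I \ {j}) : F)) • (eK I : Kan n F) := by
        rw [kmul_eK_eK, gmul_single_disj Finset.disjoint_sdiff,
          Finset.union_sdiff_of_subset (Finset.singleton_subset_iff.mpr hj)]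
        simp [eK]
      have hxt1 : kmul (eK ({j} : Finset (Fin n))) (eK I) = (0 : Kan n F) := by
        rw [kmul_eK_eK, gmul_single_nondisj (Finset.not_disjoint_iff.mpr
          ⟨j, Finset.mem_singleton_self j, hj⟩)]
        rfl
      have hyt1 : kmul (eK (I \ {j})) (eK I) = (0 : Kan n F) := by
        rw [kmul_eK_eK, gmul_single_nondisj (Finset.not_disjoint_iff.mpr
          ⟨k, Finset.mem_sdiff.mpr ⟨hk, by simp [hkj]⟩, hk⟩)]
        rfl
      have hε : ((gsign ({j} : Finset (Fin n)) (I \ {j}) : ℤ) : F) ≠ 0 := by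
        unfold gsign
        push_cast
        exact pow_ne_zero _ (by norm_num)
      exact key1 act hJ hchar hε hx1 hy1 ht1 hxy1 hxt1 hyt1
  exact ⟨part1, part2⟩
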